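/- For every integer n with n ≡ 5 (mod 8) and 5 ≤ n ≤ 205, the n-crossing permutations over S_{n+3} generate exactly the group of even parity-preserving permutations: C(n, n+3) = P_{n+3} ∩ A_{n+3}, the subgroup of all σ ∈ S_{n+3} satisfying σ(i) ≡ i (mod 2) for all i and having sign +1. -/

import Mathlib

/-- The underlying function of the `n`-crossing permutation `π_j` over `{1, …, m}` (as a
function on `ℕ`): it sends `j + k` to `j + n - 1 - k` for `0 ≤ k ≤ n - 1` and fixes all
other points. -/
def crossFun (n j i : ℕ) : ℕ :=
  if j ≤ i ∧ i < j + n then 2 * j + n - 1 - i else i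

lemma crossFun_involutive (n j : ℕ) : Function.Involutive (crossFun n j) := by
  intro i
  unfold crossFun
  split_ifs <;> omega

/-- The `n`-crossing permutation `π_j`, viewed as a permutation of `ℕ` fixing every point
outside `{j, …, j + n - 1}`. -/
def crossPerm (n j : ℕ) : Equiv.Perm ℕ :=
  Function.Involutive.toPerm _ (crossFun_involutive n j)

/-- `C n m` is the subgroup of the symmetric group `S_m` (realized as permutations of `ℕ`
supported on `{1, …, m}`) generated by the `n`-crossing permutations `π_1, …, π_{m-n+1}`. -/
def C (n m : ℕ) : Subgroup (Equiv.Perm ℕ) :=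
  Subgroup.closure {σ | ∃ j, 1 ≤ j ∧ j ≤ m - n + 1 ∧ σ = crossPerm n j}


/-- A (finitely supported) permutation is even if it is a product of an even number of
transpositions. For a permutation supported on `{1, ..., m}` this says exactly that it lies
in the alternating group `A_m`. -/
def IsEvenPerm (s : Equiv.Perm ℕ) : Prop :=
  ∃ l : List (Equiv.Perm ℕ), (∀ t ∈ l, t.IsSwap) ∧ l.prod = s ∧ Even l.length


lemma crossPerm_apply (n j i : ℕ) : crossPerm n j i = crossFun n j i := rfl

lemma crossPerm_one (j : ℕ) : crossPerm 1 j = 1 := by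
  ext i
  simp only [crossPerm_apply, crossFun, Equiv.Perm.coe_one, id_eq]
  split_ifs <;> omega

lemma crossRec (n j : ℕ) (hn : 2 ≤ n) :
    crossPerm n j = Equiv.swap j (j + n - 1) * crossPerm (n - 2) (j + 1) := by
  ext i
  simp only [Equiv.Perm.mul_apply, crossPerm_apply, crossFun, Equiv.swap_apply_def]
  split_ifs <;> omega

lemma crossPerm_eq_prod : ∀ (K j : ℕ),
    ((List.range K).map (fun k => Equiv.swap (j + k) (j + 2 * K - k))).prod
      = crossPerm (2 * K + 1) j := by
  intro K
  induction K with
  | zero => intro j; simp [crossPerm_one]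
  | succ K ih =>
    intro j
    rw [List.range_succ_eq_map, List.map_cons, List.map_map, List.prod_cons]
    rw [crossRec (2 * (K + 1) + 1) j (by omega)]
    have h1 : j + 0 = j := by omega
    have h2 : j + 2 * (K + 1) - 0 = j + (2 * (K + 1) + 1) - 1 := by omega
    rw [h1, h2]
    congr 1
    have : ((fun k => Equiv.swap (j + k) (j + 2 * (K + 1) - k)) ∘ Nat.succ)
        = fun k => Equiv.swap (j + 1 + k) (j + 1 + 2 * K - k) := by
      funext k
      simp only [Function.comp]
      congr 1 <;> omega
    have h3 : 2 * (K + 1) + 1 - 2 = 2 * K + 1 := by omega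
    rw [this, ih (j + 1), h3]

lemma pred_iff_of_fix (N : ℕ) (σ : Equiv.Perm ℕ) (hfix : ∀ i, N ≤ i → σ i = i) :
    ∀ x, x < N ↔ σ x < N := by
  intro x
  constructor
  · intro hx
    by_contra h
    push_neg at h
    have h2 := hfix _ h
    have h3 : σ x = x := σ.injective h2
    omega
  · intro h
    by_contra hx
    push_neg at hx
    have := hfix x hx
    omega

lemma prod_fix (N : ℕ) : ∀ (l : List (Equiv.Perm ℕ)), (∀ t ∈ l, ∀ i, N ≤ i → t i = i) →
    ∀ i, N ≤ i → l.prod i = i := by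
  intro l
  induction l with
  | nil => intro _ i _; simp
  | cons a l ih =>
    intro h i hi
    rw [List.prod_cons, Equiv.Perm.mul_apply, ih (fun t ht => h t (by simp [ht])) i hi]
    exact h a (by simp) i hi

lemma exists_bound : ∀ (l : List (Equiv.Perm ℕ)), (∀ t ∈ l, t.IsSwap) →
    ∃ N, ∀ t ∈ l, ∀ i, N ≤ i → t i = i := by
  intro l
  induction l with
  | nil => exact fun _ => ⟨0, by simp⟩
  | cons a l ih =>
    intro h
    obtain ⟨N, hN⟩ := ih (fun t ht => h t (by simp [ht]))
    obtain ⟨x, y, hxy, rfl⟩ := h a (by simp)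
    refine ⟨max N (max x y) + 1, ?_⟩
    intro t ht i hi
    rcases List.mem_cons.1 ht with rfl | ht
    · exact Equiv.swap_apply_of_ne_of_ne (by omega) (by omega)
    · exact hN t ht i (by omega)

lemma subtypePerm_swap (N x y : ℕ) (hx : x < N) (hy : y < N) (h) :
    (Equiv.swap x y).subtypePerm h
      = Equiv.swap (⟨x, hx⟩ : {i : ℕ // i < N}) ⟨y, hy⟩ := by
  ext ⟨i, hi⟩
  simp only [Equiv.Perm.subtypePerm_apply, Equiv.swap_apply_def, Subtype.mk.injEq,
    apply_ite (Subtype.val)]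

lemma down_aux (N : ℕ) : ∀ (l : List (Equiv.Perm ℕ)),
    (∀ t ∈ l, t.IsSwap ∧ ∀ i, N ≤ i → t i = i) →
    ∀ (hp : ∀ x, x < N ↔ l.prod x < N),
    ∃ l' : List (Equiv.Perm {i : ℕ // i < N}),
      (∀ t ∈ l', t.IsSwap) ∧ l'.length = l.length ∧ l'.prod = l.prod.subtypePerm (fun x => (hp x).symm) := by
  intro l
  induction l with
  | nil =>
    intro _ hp
    refine ⟨[], by simp, rfl, ?_⟩
    ext x
    simp [Equiv.Perm.subtypePerm_apply]
  | cons a l ih =>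
    intro h hp
    have ha := h a (by simp)
    have hl : ∀ t ∈ l, t.IsSwap ∧ ∀ i, N ≤ i → t i = i := fun t ht => h t (by simp [ht])
    have hfixl : ∀ i, N ≤ i → l.prod i = i := prod_fix N l (fun t ht => (hl t ht).2)
    have hpl : ∀ x, x < N ↔ l.prod x < N := pred_iff_of_fix N _ hfixl
    have hpa : ∀ x, x < N ↔ a x < N := pred_iff_of_fix N _ ha.2
    obtain ⟨l', h1, h2, h3⟩ := ih hl hpl
    obtain ⟨x, y, hxy, hswap⟩ := ha.1
    have hax : a x = y := by rw [hswap]; exact Equiv.swap_apply_left x y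
    have hay : a y = x := by rw [hswap]; exact Equiv.swap_apply_right x y
    have hx : x < N := by
      by_contra hc
      push_neg at hc
      have := ha.2 x hc
      rw [hax] at this
      exact hxy this.symm
    have hy : y < N := by
      by_contra hc
      push_neg at hc
      have := ha.2 y hc
      rw [hay] at this
      exact hxy this
    have hsub : a.subtypePerm (fun x => (hpa x).symm) = Equiv.swap (⟨x, hx⟩ : {i : ℕ // i < N}) ⟨y, hy⟩ := by
      subst hswap
      exact subtypePerm_swap N x y hx hy _
    refine ⟨Equiv.swap (⟨x, hx⟩ : {i : ℕ // i < N}) ⟨y, hy⟩ :: l', ?_, by simp [h2], ?_⟩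
    · intro t ht
      rcases List.mem_cons.1 ht with rfl | ht
      · exact ⟨⟨x, hx⟩, ⟨y, hy⟩, by simp [Subtype.ext_iff, hxy], rfl⟩
      · exact h1 t ht
    · rw [List.prod_cons, ← hsub, h3]
      ext ⟨i, hi⟩
      simp [Equiv.Perm.subtypePerm_apply, List.prod_cons]
      rfl

lemma swaps_prod_one_even (l : List (Equiv.Perm ℕ)) (hl : ∀ t ∈ l, t.IsSwap)
    (h1 : l.prod = 1) : Even l.length := by
  obtain ⟨N, hN⟩ := exists_bound l hl
  have hfix : ∀ i, N ≤ i → l.prod i = i := prod_fix N l hN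
  have hp := pred_iff_of_fix N _ hfix
  obtain ⟨l', h1', h2', h3'⟩ := down_aux N l (fun t ht => ⟨hl t ht, hN t ht⟩) hp
  letI : Fintype {i : ℕ // i < N} := Fintype.ofEquiv (Fin N) Fin.equivSubtype
  have hs := Equiv.Perm.sign_prod_list_swap h1'
  rw [h3'] at hs
  have hone : l.prod.subtypePerm (p := fun x => x < N) (fun x => (hp x).symm) = 1 := by
    ext x
    simp [Equiv.Perm.subtypePerm_apply, h1]
  rw [hone, map_one] at hs
  rcases Nat.even_or_odd l'.length with he | ho
  · rwa [h2'] at he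
  · exfalso
    rw [ho.neg_one_pow] at hs
    exact absurd hs (by decide)

lemma swap_lists_even_iff (l1 l2 : List (Equiv.Perm ℕ)) (h1 : ∀ t ∈ l1, t.IsSwap)
    (h2 : ∀ t ∈ l2, t.IsSwap) (hp : l1.prod = l2.prod) :
    Even l1.length ↔ Even l2.length := by
  have key := swaps_prod_one_even (l1 ++ l2.reverse.map (fun t => t⁻¹)) ?_ ?_
  · rw [List.length_append, List.length_map, List.length_reverse] at key
    rw [Nat.even_add] at key
    exact key
  · intro t ht
    rcases List.mem_append.1 ht with ht | ht
    · exact h1 t ht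
    · obtain ⟨s, hs, rfl⟩ := List.mem_map.1 ht
      obtain ⟨x, y, hxy, rfl⟩ := h2 s (List.mem_reverse.1 hs)
      exact ⟨x, y, hxy, by rw [Equiv.swap_inv]⟩
  · rw [List.prod_append, hp]
    rw [List.map_reverse, ← List.prod_inv_reverse]
    simp


lemma gen_mem (n j : ℕ) (h1 : 1 ≤ j) (h4 : j ≤ 4) :
    crossPerm n j ∈ C n (n + 3) :=
  Subgroup.subset_closure ⟨j, h1, by omega, rfl⟩

lemma a_apply (n x : ℕ) (hn5 : 5 ≤ n) (h1 : 1 ≤ x) (h2 : x ≤ n - 1) :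
    (crossPerm n 2 * crossPerm n 1) x = x + 2 := by
  simp only [Equiv.Perm.mul_apply, crossPerm_apply, crossFun]
  split_ifs <;> omega

lemma a_fix (n : ℕ) (hn5 : 5 ≤ n) : (crossPerm n 2 * crossPerm n 1) (n + 2) = n + 2 := by
  simp only [Equiv.Perm.mul_apply, crossPerm_apply, crossFun]
  split_ifs <;> omega

lemma b_apply (n x : ℕ) (hn5 : 5 ≤ n) (h1 : 2 ≤ x) (h2 : x ≤ n) :
    (crossPerm n 3 * crossPerm n 2) x = x + 2 := by
  simp only [Equiv.Perm.mul_apply, crossPerm_apply, crossFun]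
  split_ifs <;> omega

lemma b_fix (n : ℕ) (hn5 : 5 ≤ n) : (crossPerm n 3 * crossPerm n 2) (n + 3) = n + 3 := by
  simp only [Equiv.Perm.mul_apply, crossPerm_apply, crossFun]
  split_ifs <;> omega

lemma t1_eq (n : ℕ) (hn5 : 5 ≤ n) :
    crossPerm n 2 * crossPerm n 1 * crossPerm n 2 * crossPerm n 3
      = Equiv.swap (n + 2) 3 * Equiv.swap (n + 2) 1 := by
  ext i
  simp only [Equiv.Perm.mul_apply, crossPerm_apply, crossFun, Equiv.swap_apply_def]
  split_ifs <;> omega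

lemma t2_eq (n : ℕ) (hn5 : 5 ≤ n) :
    crossPerm n 3 * crossPerm n 2 * crossPerm n 3 * crossPerm n 4
      = Equiv.swap (n + 3) 4 * Equiv.swap (n + 3) 2 := by
  ext i
  simp only [Equiv.Perm.mul_apply, crossPerm_apply, crossFun, Equiv.swap_apply_def]
  split_ifs <;> omega

lemma a_mem (n : ℕ) : crossPerm n 2 * crossPerm n 1 ∈ C n (n + 3) :=
  mul_mem (gen_mem n 2 (by omega) (by omega)) (gen_mem n 1 (by omega) (by omega))

lemma b_mem (n : ℕ) : crossPerm n 3 * crossPerm n 2 ∈ C n (n + 3) :=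
  mul_mem (gen_mem n 3 (by omega) (by omega)) (gen_mem n 2 (by omega) (by omega))

lemma t1_mem (n : ℕ) (hn5 : 5 ≤ n) :
    Equiv.swap (n + 2) 3 * Equiv.swap (n + 2) 1 ∈ C n (n + 3) := by
  rw [← t1_eq n hn5]
  exact mul_mem (mul_mem (a_mem n) (gen_mem n 2 (by omega) (by omega)))
    (gen_mem n 3 (by omega) (by omega))

lemma t2_mem (n : ℕ) (hn5 : 5 ≤ n) :
    Equiv.swap (n + 3) 4 * Equiv.swap (n + 3) 2 ∈ C n (n + 3) := by
  rw [← t2_eq n hn5]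
  exact mul_mem (mul_mem (b_mem n) (gen_mem n 3 (by omega) (by omega)))
    (gen_mem n 4 (by omega) (by omega))

lemma conj_pair (g s t : Equiv.Perm ℕ) :
    g * (s * t) * g⁻¹ = (g * s * g⁻¹) * (g * t * g⁻¹) := by group

lemma dO_step (n : ℕ) (hn5 : 5 ≤ n) : ∀ k, 2 * k + 3 ≤ n →
    Equiv.swap (n + 2) (2 * k + 3) * Equiv.swap (n + 2) (2 * k + 1) ∈ C n (n + 3) := by
  intro k
  induction k with
  | zero => intro _; exact t1_mem n hn5
  | succ k ih =>
    intro hk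
    have h1 := ih (by omega)
    set g := crossPerm n 2 * crossPerm n 1 with hg
    have hmem := mul_mem (mul_mem (a_mem n) h1) (inv_mem (a_mem n))
    have key : g * (Equiv.swap (n + 2) (2 * k + 3) * Equiv.swap (n + 2) (2 * k + 1)) * g⁻¹
        = Equiv.swap (n + 2) (2 * (k + 1) + 3) * Equiv.swap (n + 2) (2 * (k + 1) + 1) := by
      rw [conj_pair, ← Equiv.swap_apply_apply, ← Equiv.swap_apply_apply]
      rw [a_fix n hn5, a_apply n (2 * k + 3) hn5 (by omega) (by omega),
        a_apply n (2 * k + 1) hn5 (by omega) (by omega)]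
      have e1 : 2 * k + 3 + 2 = 2 * (k + 1) + 3 := by omega
      have e2 : 2 * k + 1 + 2 = 2 * (k + 1) + 1 := by omega
      rw [e1, e2]
    rw [← key]
    exact hmem

lemma dE_step (n : ℕ) (hn5 : 5 ≤ n) : ∀ k, 2 * k + 4 ≤ n + 1 →
    Equiv.swap (n + 3) (2 * k + 4) * Equiv.swap (n + 3) (2 * k + 2) ∈ C n (n + 3) := by
  intro k
  induction k with
  | zero => intro _; exact t2_mem n hn5
  | succ k ih =>
    intro hk
    have h1 := ih (by omega)
    set g := crossPerm n 3 * crossPerm n 2 with hg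
    have hmem := mul_mem (mul_mem (b_mem n) h1) (inv_mem (b_mem n))
    have key : g * (Equiv.swap (n + 3) (2 * k + 4) * Equiv.swap (n + 3) (2 * k + 2)) * g⁻¹
        = Equiv.swap (n + 3) (2 * (k + 1) + 4) * Equiv.swap (n + 3) (2 * (k + 1) + 2) := by
      rw [conj_pair, ← Equiv.swap_apply_apply, ← Equiv.swap_apply_apply]
      rw [b_fix n hn5, b_apply n (2 * k + 4) hn5 (by omega) (by omega),
        b_apply n (2 * k + 2) hn5 (by omega) (by omega)]
      have e1 : 2 * k + 4 + 2 = 2 * (k + 1) + 4 := by omega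
      have e2 : 2 * k + 2 + 2 = 2 * (k + 1) + 2 := by omega
      rw [e1, e2]
    rw [← key]
    exact hmem

lemma dO_base (n : ℕ) (hn5 : 5 ≤ n) : ∀ k, 2 * k + 1 ≤ n →
    Equiv.swap (n + 2) (2 * k + 1) * Equiv.swap (n + 2) 1 ∈ C n (n + 3) := by
  intro k
  induction k with
  | zero => intro _; rw [Equiv.swap_mul_self]; exact one_mem _
  | succ k ih =>
    intro hk
    have h1 := ih (by omega)
    have h2 := dO_step n hn5 k (by omega)
    have e : Equiv.swap (n + 2) (2 * (k + 1) + 1) * Equiv.swap (n + 2) 1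
        = (Equiv.swap (n + 2) (2 * k + 3) * Equiv.swap (n + 2) (2 * k + 1))
          * (Equiv.swap (n + 2) (2 * k + 1) * Equiv.swap (n + 2) 1) := by
      have h3 : 2 * (k + 1) + 1 = 2 * k + 3 := by omega
      rw [h3, mul_assoc, ← mul_assoc (Equiv.swap (n + 2) (2 * k + 1)), Equiv.swap_mul_self,
        one_mul]
    rw [e]
    exact mul_mem h2 h1

lemma dE_base (n : ℕ) (hn5 : 5 ≤ n) : ∀ k, 2 * k + 2 ≤ n + 1 →
    Equiv.swap (n + 3) (2 * k + 2) * Equiv.swap (n + 3) 2 ∈ C n (n + 3) := by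
  intro k
  induction k with
  | zero => intro _; rw [Equiv.swap_mul_self]; exact one_mem _
  | succ k ih =>
    intro hk
    have h1 := ih (by omega)
    have h2 := dE_step n hn5 k (by omega)
    have e : Equiv.swap (n + 3) (2 * (k + 1) + 2) * Equiv.swap (n + 3) 2
        = (Equiv.swap (n + 3) (2 * k + 4) * Equiv.swap (n + 3) (2 * k + 2))
          * (Equiv.swap (n + 3) (2 * k + 2) * Equiv.swap (n + 3) 2) := by
      have h3 : 2 * (k + 1) + 2 = 2 * k + 4 := by omega
      rw [h3, mul_assoc, ← mul_assoc (Equiv.swap (n + 3) (2 * k + 2)), Equiv.swap_mul_self,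
        one_mul]
    rw [e]
    exact mul_mem h2 h1

lemma dO_mem (n x y : ℕ) (hn5 : 5 ≤ n) (hx : x % 2 = 1) (hy : y % 2 = 1)
    (hx1 : 1 ≤ x) (hxn : x ≤ n) (hy1 : 1 ≤ y) (hyn : y ≤ n) :
    Equiv.swap (n + 2) x * Equiv.swap (n + 2) y ∈ C n (n + 3) := by
  obtain ⟨kx, rfl⟩ : ∃ k, x = 2 * k + 1 := ⟨x / 2, by omega⟩
  obtain ⟨ky, rfl⟩ : ∃ k, y = 2 * k + 1 := ⟨y / 2, by omega⟩
  have e : Equiv.swap (n + 2) (2 * kx + 1) * Equiv.swap (n + 2) (2 * ky + 1)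
      = (Equiv.swap (n + 2) (2 * kx + 1) * Equiv.swap (n + 2) 1)
        * (Equiv.swap (n + 2) (2 * ky + 1) * Equiv.swap (n + 2) 1)⁻¹ := by
    rw [mul_inv_rev, Equiv.swap_inv, Equiv.swap_inv, mul_assoc,
      ← mul_assoc (Equiv.swap (n + 2) 1), Equiv.swap_mul_self, one_mul]
  rw [e]
  exact mul_mem (dO_base n hn5 kx (by omega)) (inv_mem (dO_base n hn5 ky (by omega)))

lemma dE_mem (n x y : ℕ) (hn5 : 5 ≤ n) (hx : x % 2 = 0) (hy : y % 2 = 0)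
    (hx1 : 2 ≤ x) (hxn : x ≤ n + 1) (hy1 : 2 ≤ y) (hyn : y ≤ n + 1) :
    Equiv.swap (n + 3) x * Equiv.swap (n + 3) y ∈ C n (n + 3) := by
  obtain ⟨kx, rfl⟩ : ∃ k, x = 2 * k + 2 := ⟨(x - 2) / 2, by omega⟩
  obtain ⟨ky, rfl⟩ : ∃ k, y = 2 * k + 2 := ⟨(y - 2) / 2, by omega⟩
  have e : Equiv.swap (n + 3) (2 * kx + 2) * Equiv.swap (n + 3) (2 * ky + 2)
      = (Equiv.swap (n + 3) (2 * kx + 2) * Equiv.swap (n + 3) 2)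
        * (Equiv.swap (n + 3) (2 * ky + 2) * Equiv.swap (n + 3) 2)⁻¹ := by
    rw [mul_inv_rev, Equiv.swap_inv, Equiv.swap_inv, mul_assoc,
      ← mul_assoc (Equiv.swap (n + 3) 2), Equiv.swap_mul_self, one_mul]
  rw [e]
  exact mul_mem (dE_base n hn5 kx (by omega)) (inv_mem (dE_base n hn5 ky (by omega)))

lemma swap_eq_three (p a b : ℕ) (hpa : a ≠ p) (hpb : b ≠ p) (hab : a ≠ b) :
    Equiv.swap a b = Equiv.swap p a * Equiv.swap p b * Equiv.swap p a := by
  have h := Equiv.swap_apply_apply (Equiv.swap p a) p b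
  rw [Equiv.swap_apply_left] at h
  rw [Equiv.swap_apply_of_ne_of_ne hpb (Ne.symm hab)] at h
  rw [h, Equiv.swap_inv]

def oddSwap (n : ℕ) (t : Equiv.Perm ℕ) : Prop :=
  ∃ a b, a % 2 = 1 ∧ b % 2 = 1 ∧ 1 ≤ a ∧ a ≤ n + 2 ∧ 1 ≤ b ∧ b ≤ n + 2 ∧ a ≠ b ∧
    t = Equiv.swap a b

def evenSwap (n : ℕ) (t : Equiv.Perm ℕ) : Prop :=
  ∃ a b, a % 2 = 0 ∧ b % 2 = 0 ∧ 2 ≤ a ∧ a ≤ n + 3 ∧ 2 ≤ b ∧ b ≤ n + 3 ∧ a ≠ b ∧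
    t = Equiv.swap a b

lemma odd_swap_rep (n a b : ℕ) (hn : n % 8 = 5) (hn5 : 5 ≤ n) (ha : a % 2 = 1)
    (hb : b % 2 = 1) (ha1 : 1 ≤ a) (ha2 : a ≤ n + 2) (hb1 : 1 ≤ b) (hb2 : b ≤ n + 2)
    (hab : a ≠ b) :
    ∃ u v w, u % 2 = 1 ∧ v % 2 = 1 ∧ w % 2 = 1 ∧ 1 ≤ u ∧ u ≤ n ∧ 1 ≤ v ∧ v ≤ n ∧
      1 ≤ w ∧ w ≤ n ∧
      Equiv.swap a b = Equiv.swap (n + 2) u * Equiv.swap (n + 2) v * Equiv.swap (n + 2) w := by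
  rcases eq_or_ne a (n + 2) with rfl | hap
  · refine ⟨b, 1, 1, hb, by omega, by omega, by omega, by omega, by omega, by omega, by omega,
      by omega, ?_⟩
    rw [mul_assoc, Equiv.swap_mul_self, mul_one]
  · rcases eq_or_ne b (n + 2) with rfl | hbp
    · refine ⟨a, 1, 1, ha, by omega, by omega, by omega, by omega, by omega, by omega, by omega,
        by omega, ?_⟩
      rw [mul_assoc, Equiv.swap_mul_self, mul_one, Equiv.swap_comm]
    · exact ⟨a, b, a, ha, hb, ha, by omega, by omega, by omega, by omega, by omega, by omega,
        swap_eq_three (n + 2) a b hap hbp hab⟩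

lemma even_swap_rep (n a b : ℕ) (hn : n % 8 = 5) (hn5 : 5 ≤ n) (ha : a % 2 = 0)
    (hb : b % 2 = 0) (ha1 : 2 ≤ a) (ha2 : a ≤ n + 3) (hb1 : 2 ≤ b) (hb2 : b ≤ n + 3)
    (hab : a ≠ b) :
    ∃ u v w, u % 2 = 0 ∧ v % 2 = 0 ∧ w % 2 = 0 ∧ 2 ≤ u ∧ u ≤ n + 1 ∧ 2 ≤ v ∧ v ≤ n + 1 ∧
      2 ≤ w ∧ w ≤ n + 1 ∧
      Equiv.swap a b = Equiv.swap (n + 3) u * Equiv.swap (n + 3) v * Equiv.swap (n + 3) w := by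
  rcases eq_or_ne a (n + 3) with rfl | hap
  · refine ⟨b, 2, 2, hb, by omega, by omega, by omega, by omega, by omega, by omega, by omega,
      by omega, ?_⟩
    rw [mul_assoc, Equiv.swap_mul_self, mul_one]
  · rcases eq_or_ne b (n + 3) with rfl | hbp
    · refine ⟨a, 2, 2, ha, by omega, by omega, by omega, by omega, by omega, by omega, by omega,
        by omega, ?_⟩
      rw [mul_assoc, Equiv.swap_mul_self, mul_one, Equiv.swap_comm]
    · exact ⟨a, b, a, ha, hb, ha, by omega, by omega, by omega, by omega, by omega, by omega,
        swap_eq_three (n + 3) a b hap hbp hab⟩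

lemma two_odd_swaps (n : ℕ) (hn : n % 8 = 5) (hn5 : 5 ≤ n) (s t : Equiv.Perm ℕ)
    (hs : oddSwap n s) (ht : oddSwap n t) : s * t ∈ C n (n + 3) := by
  obtain ⟨a, b, ha, hb, ha1, ha2, hb1, hb2, hab, rfl⟩ := hs
  obtain ⟨c, d, hc, hd, hc1, hc2, hd1, hd2, hcd, rfl⟩ := ht
  obtain ⟨u1, v1, w1, p1, p2, p3, q1, q2, q3, q4, q5, q6, he1⟩ :=
    odd_swap_rep n a b hn hn5 ha hb ha1 ha2 hb1 hb2 hab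
  obtain ⟨u2, v2, w2, r1, r2, r3, s1, s2, s3, s4, s5, s6, he2⟩ :=
    odd_swap_rep n c d hn hn5 hc hd hc1 hc2 hd1 hd2 hcd
  rw [he1, he2]
  have e : Equiv.swap (n + 2) u1 * Equiv.swap (n + 2) v1 * Equiv.swap (n + 2) w1 *
      (Equiv.swap (n + 2) u2 * Equiv.swap (n + 2) v2 * Equiv.swap (n + 2) w2)
      = (Equiv.swap (n + 2) u1 * Equiv.swap (n + 2) v1) *
        ((Equiv.swap (n + 2) w1 * Equiv.swap (n + 2) u2) *
          (Equiv.swap (n + 2) v2 * Equiv.swap (n + 2) w2)) := by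
    group
  rw [e]
  exact mul_mem (dO_mem n u1 v1 hn5 p1 p2 q1 q2 q3 q4)
    (mul_mem (dO_mem n w1 u2 hn5 p3 r1 q5 q6 s1 s2) (dO_mem n v2 w2 hn5 r2 r3 s3 s4 s5 s6))

lemma two_even_swaps (n : ℕ) (hn : n % 8 = 5) (hn5 : 5 ≤ n) (s t : Equiv.Perm ℕ)
    (hs : evenSwap n s) (ht : evenSwap n t) : s * t ∈ C n (n + 3) := by
  obtain ⟨a, b, ha, hb, ha1, ha2, hb1, hb2, hab, rfl⟩ := hs
  obtain ⟨c, d, hc, hd, hc1, hc2, hd1, hd2, hcd, rfl⟩ := ht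
  obtain ⟨u1, v1, w1, p1, p2, p3, q1, q2, q3, q4, q5, q6, he1⟩ :=
    even_swap_rep n a b hn hn5 ha hb ha1 ha2 hb1 hb2 hab
  obtain ⟨u2, v2, w2, r1, r2, r3, s1, s2, s3, s4, s5, s6, he2⟩ :=
    even_swap_rep n c d hn hn5 hc hd hc1 hc2 hd1 hd2 hcd
  rw [he1, he2]
  have e : Equiv.swap (n + 3) u1 * Equiv.swap (n + 3) v1 * Equiv.swap (n + 3) w1 *
      (Equiv.swap (n + 3) u2 * Equiv.swap (n + 3) v2 * Equiv.swap (n + 3) w2)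
      = (Equiv.swap (n + 3) u1 * Equiv.swap (n + 3) v1) *
        ((Equiv.swap (n + 3) w1 * Equiv.swap (n + 3) u2) *
          (Equiv.swap (n + 3) v2 * Equiv.swap (n + 3) w2)) := by
    group
  rw [e]
  exact mul_mem (dE_mem n u1 v1 hn5 p1 p2 q1 q2 q3 q4)
    (mul_mem (dE_mem n w1 u2 hn5 p3 r1 q5 q6 s1 s2) (dE_mem n v2 w2 hn5 r2 r3 s3 s4 s5 s6))

lemma oddSwap_13 (n : ℕ) (hn5 : 5 ≤ n) : oddSwap n (Equiv.swap 1 3) :=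
  ⟨1, 3, by omega, by omega, by omega, by omega, by omega, by omega, by omega, rfl⟩

lemma evenSwap_24 (n : ℕ) (hn5 : 5 ≤ n) : evenSwap n (Equiv.swap 2 4) :=
  ⟨2, 4, by omega, by omega, by omega, by omega, by omega, by omega, by omega, rfl⟩

lemma odd_list_mem (n : ℕ) (hn : n % 8 = 5) (hn5 : 5 ≤ n) :
    ∀ l : List (Equiv.Perm ℕ), (∀ t ∈ l, oddSwap n t) →
    (Even l.length → l.prod ∈ C n (n + 3)) ∧
    (¬Even l.length → Equiv.swap 1 3 * l.prod ∈ C n (n + 3)) := by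
  intro l
  induction l with
  | nil =>
    intro _
    exact ⟨fun _ => one_mem _, fun h => absurd (by simp) h⟩
  | cons t l ih =>
    intro h
    have ht := h t (by simp)
    have ihl := ih (fun s hs => h s (by simp [hs]))
    constructor
    · intro he
      have hlo : ¬Even l.length := by
        rw [List.length_cons, Nat.even_add_one] at he
        exact he
      have h2 := ihl.2 hlo
      have e : (t :: l).prod = (t * Equiv.swap 1 3) * (Equiv.swap 1 3 * l.prod) := by
        rw [List.prod_cons, ← mul_assoc, mul_assoc t, Equiv.swap_mul_self, mul_one]
      rw [e]
      exact mul_mem (two_odd_swaps n hn hn5 t _ ht (oddSwap_13 n hn5)) h2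
    · intro ho
      have hle : Even l.length := by
        rw [List.length_cons, Nat.even_add_one] at ho
        simpa using ho
      have h2 := ihl.1 hle
      rw [List.prod_cons, ← mul_assoc]
      exact mul_mem (two_odd_swaps n hn hn5 _ t (oddSwap_13 n hn5) ht) h2

lemma even_list_mem (n : ℕ) (hn : n % 8 = 5) (hn5 : 5 ≤ n) :
    ∀ l : List (Equiv.Perm ℕ), (∀ t ∈ l, evenSwap n t) →
    (Even l.length → l.prod ∈ C n (n + 3)) ∧
    (¬Even l.length → Equiv.swap 2 4 * l.prod ∈ C n (n + 3)) := by
  intro l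
  induction l with
  | nil =>
    intro _
    exact ⟨fun _ => one_mem _, fun h => absurd (by simp) h⟩
  | cons t l ih =>
    intro h
    have ht := h t (by simp)
    have ihl := ih (fun s hs => h s (by simp [hs]))
    constructor
    · intro he
      have hlo : ¬Even l.length := by
        rw [List.length_cons, Nat.even_add_one] at he
        exact he
      have h2 := ihl.2 hlo
      have e : (t :: l).prod = (t * Equiv.swap 2 4) * (Equiv.swap 2 4 * l.prod) := by
        rw [List.prod_cons, ← mul_assoc, mul_assoc t, Equiv.swap_mul_self, mul_one]
      rw [e]
      exact mul_mem (two_even_swaps n hn hn5 t _ ht (evenSwap_24 n hn5)) h2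
    · intro ho
      have hle : Even l.length := by
        rw [List.length_cons, Nat.even_add_one] at ho
        simpa using ho
      have h2 := ihl.1 hle
      rw [List.prod_cons, ← mul_assoc]
      exact mul_mem (two_even_swaps n hn hn5 _ t (evenSwap_24 n hn5) ht) h2

def movesOdd (f : Equiv.Perm ℕ) : Prop := ∀ x, f x ≠ x → x % 2 = 1
def movesEven (f : Equiv.Perm ℕ) : Prop := ∀ x, f x ≠ x → x % 2 = 0

lemma oddSwap_movesOdd (n : ℕ) (t : Equiv.Perm ℕ) (h : oddSwap n t) : movesOdd t := by
  obtain ⟨a, b, ha, hb, _, _, _, _, _, rfl⟩ := h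
  intro x hx
  rw [Equiv.swap_apply_def] at hx
  split_ifs at hx <;> omega

lemma evenSwap_movesEven (n : ℕ) (t : Equiv.Perm ℕ) (h : evenSwap n t) : movesEven t := by
  obtain ⟨a, b, ha, hb, _, _, _, _, _, rfl⟩ := h
  intro x hx
  rw [Equiv.swap_apply_def] at hx
  split_ifs at hx <;> omega

lemma movesOdd_mul {f g : Equiv.Perm ℕ} (hf : movesOdd f) (hg : movesOdd g) :
    movesOdd (f * g) := by
  intro x hx
  rw [Equiv.Perm.mul_apply] at hx
  by_cases h : g x = x
  · exact hf x (by rwa [h] at hx)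
  · exact hg x h

lemma movesOdd_prod : ∀ (l : List (Equiv.Perm ℕ)), (∀ t ∈ l, movesOdd t) →
    movesOdd l.prod := by
  intro l
  induction l with
  | nil => intro _ x hx; simp at hx
  | cons t l ih =>
    intro h
    rw [List.prod_cons]
    exact movesOdd_mul (h t (by simp)) (ih (fun s hs => h s (by simp [hs])))

lemma movesEven_mul {f g : Equiv.Perm ℕ} (hf : movesEven f) (hg : movesEven g) :
    movesEven (f * g) := by
  intro x hx
  rw [Equiv.Perm.mul_apply] at hx
  by_cases h : g x = x
  · exact hf x (by rwa [h] at hx)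
  · exact hg x h

lemma movesEven_prod : ∀ (l : List (Equiv.Perm ℕ)), (∀ t ∈ l, movesEven t) →
    movesEven l.prod := by
  intro l
  induction l with
  | nil => intro _ x hx; simp at hx
  | cons t l ih =>
    intro h
    rw [List.prod_cons]
    exact movesEven_mul (h t (by simp)) (ih (fun s hs => h s (by simp [hs])))

lemma commute_of_moves {f g : Equiv.Perm ℕ} (hf : movesOdd f) (hg : movesEven g) :
    Commute f g := by
  apply Equiv.Perm.Disjoint.commute
  intro x
  by_contra h
  push_neg at h
  have h1 := hf x h.1
  have h2 := hg x h.2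
  omega

lemma sep (n : ℕ) : ∀ (l : List (Bool × Equiv.Perm ℕ)),
    (∀ x ∈ l, x.1 = true → oddSwap n x.2) → (∀ x ∈ l, x.1 = false → evenSwap n x.2) →
    ∃ lO lE : List (Equiv.Perm ℕ), (∀ t ∈ lO, oddSwap n t) ∧ (∀ t ∈ lE, evenSwap n t) ∧
      lO.prod * lE.prod = (l.map Prod.snd).prod ∧
      lO.length = (l.filter (fun x => x.1)).length ∧
      lE.length = (l.filter (fun x => !x.1)).length := by
  intro l
  induction l with
  | nil => exact fun _ _ => ⟨[], [], by simp, by simp, by simp, by simp, by simp⟩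
  | cons a l ih =>
    intro hO hE
    obtain ⟨lO, lE, h1, h2, h3, h4, h5⟩ :=
      ih (fun x hx => hO x (by simp [hx])) (fun x hx => hE x (by simp [hx]))
    rcases a with ⟨b, t⟩
    cases b
    · -- even
      have ht : evenSwap n t := hE (false, t) (by simp) rfl
      refine ⟨lO, t :: lE, h1, ?_, ?_, by simpa using h4, by simpa using h5⟩
      · intro s hs
        rcases List.mem_cons.1 hs with rfl | hs
        · exact ht
        · exact h2 s hs
      · rw [List.prod_cons, List.map_cons, List.prod_cons, ← h3, ← mul_assoc]
        have hc : Commute t lO.prod :=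
          (commute_of_moves (movesOdd_prod lO (fun s hs => oddSwap_movesOdd n s (h1 s hs)))
            (evenSwap_movesEven n t ht)).symm
        rw [← hc.eq, mul_assoc]
    · -- odd
      have ht : oddSwap n t := hO (true, t) (by simp) rfl
      refine ⟨t :: lO, lE, ?_, h2, ?_, by simpa using h4, by simpa using h5⟩
      · intro s hs
        rcases List.mem_cons.1 hs with rfl | hs
        · exact ht
        · exact h1 s hs
      · rw [List.prod_cons, List.map_cons, List.prod_cons, ← h3, mul_assoc]

lemma count_true (g : ℕ → Equiv.Perm ℕ) : ∀ K,
    ((((List.range K).map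
        (fun k => (decide ((1 + k) % 2 = 1), g k)))).filter (fun x => x.1)).length
      = (K + 1) / 2 := by
  intro K
  induction K with
  | zero => simp
  | succ K ih =>
    rw [List.range_succ, List.map_append, List.filter_append, List.length_append, ih]
    by_cases h : (1 + K) % 2 = 1 <;> simp [h] <;> omega

lemma count_false (g : ℕ → Equiv.Perm ℕ) : ∀ K,
    ((((List.range K).map
        (fun k => (decide ((1 + k) % 2 = 1), g k)))).filter (fun x => !x.1)).length
      = K / 2 := by
  intro K
  induction K with
  | zero => simp
  | succ K ih =>
    rw [List.range_succ, List.map_append, List.filter_append, List.length_append, ih]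
    by_cases h : (1 + K) % 2 = 1 <;> simp [h] <;> omega

lemma decomp (n : ℕ) (hn : n % 8 = 5) : ∀ (k : ℕ) (σ : Equiv.Perm ℕ),
    ((Finset.range (n + 4)).filter (fun i => σ i ≠ i)).card ≤ k →
    (∀ i, σ i % 2 = i % 2) → (∀ i, σ i ≠ i → 1 ≤ i ∧ i ≤ n + 3) →
    ∃ l : List (Bool × Equiv.Perm ℕ),
      (∀ x ∈ l, x.1 = true → oddSwap n x.2) ∧ (∀ x ∈ l, x.1 = false → evenSwap n x.2) ∧
      (l.map Prod.snd).prod = σ := by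
  intro k
  induction k with
  | zero =>
    intro σ hcard hpar hsupp
    refine ⟨[], by simp, by simp, ?_⟩
    simp only [List.map_nil, List.prod_nil]
    symm
    ext i
    simp only [Equiv.Perm.coe_one, id_eq]
    by_contra hne
    have hbd := hsupp i hne
    have hi : i ∈ (Finset.range (n + 4)).filter (fun i => σ i ≠ i) := by
      rw [Finset.mem_filter, Finset.mem_range]
      exact ⟨by omega, hne⟩
    have hz := Finset.card_eq_zero.mp (Nat.le_zero.mp hcard)
    rw [hz] at hi
    simp at hi
  | succ k ih =>
    intro σ hcard hpar hsupp
    by_cases hσ : σ = 1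
    · exact ⟨[], by simp, by simp, by simp [hσ]⟩
    · have hne : ¬∀ i, σ i = i := fun h => hσ (Equiv.ext h)
      push_neg at hne
      obtain ⟨i, hi⟩ := hne
      have hji : σ i ≠ i := hi
      have hpij : σ i % 2 = i % 2 := hpar i
      have hibd := hsupp i hi
      have hmovej : σ (σ i) ≠ σ i := by
        intro h
        exact hji (σ.injective h)
      have hjbd := hsupp (σ i) hmovej
      have hpar' : ∀ x, (Equiv.swap i (σ i) * σ) x % 2 = x % 2 := by
        intro x
        rw [Equiv.Perm.mul_apply]
        have hsw : ∀ y, Equiv.swap i (σ i) y % 2 = y % 2 := by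
          intro y
          rw [Equiv.swap_apply_def]
          split_ifs <;> omega
        rw [hsw (σ x)]
        exact hpar x
      have hmove' : ∀ x, (Equiv.swap i (σ i) * σ) x ≠ x → σ x ≠ x := by
        intro x hx hfix
        apply hx
        have hxi : x ≠ i := by rintro rfl; exact hji hfix
        have hxj : x ≠ σ i := by
          rintro h
          rw [← h] at hmovej
          exact hmovej (by rw [hfix, h])
        rw [Equiv.Perm.mul_apply, hfix]
        exact Equiv.swap_apply_of_ne_of_ne hxi hxj
      have hsupp' : ∀ x, (Equiv.swap i (σ i) * σ) x ≠ x → 1 ≤ x ∧ x ≤ n + 3 :=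
        fun x hx => hsupp x (hmove' x hx)
      have hfixi : (Equiv.swap i (σ i) * σ) i = i := by
        rw [Equiv.Perm.mul_apply, Equiv.swap_apply_right]
      have hsub : (Finset.range (n + 4)).filter (fun x => (Equiv.swap i (σ i) * σ) x ≠ x)
          ⊂ (Finset.range (n + 4)).filter (fun x => σ x ≠ x) := by
        constructor
        · intro x hx
          rw [Finset.mem_filter] at hx ⊢
          exact ⟨hx.1, hmove' x hx.2⟩
        · intro hsub2
          have hmem : i ∈ (Finset.range (n + 4)).filter (fun x => σ x ≠ x) := by
            rw [Finset.mem_filter, Finset.mem_range]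
            exact ⟨by omega, hi⟩
          have h2 := hsub2 hmem
          rw [Finset.mem_filter] at h2
          exact h2.2 hfixi
      have hcard' : ((Finset.range (n + 4)).filter
          (fun x => (Equiv.swap i (σ i) * σ) x ≠ x)).card ≤ k := by
        have := Finset.card_lt_card hsub
        omega
      obtain ⟨l, hO, hE, hprod⟩ := ih (Equiv.swap i (σ i) * σ) hcard' hpar' hsupp'
      refine ⟨(decide (i % 2 = 1), Equiv.swap i (σ i)) :: l, ?_, ?_, ?_⟩
      · intro x hx htrue
        rcases List.mem_cons.1 hx with rfl | hx
        · have hio : i % 2 = 1 := of_decide_eq_true htrue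
          exact ⟨i, σ i, hio, by omega, by omega, by omega, by omega, by omega,
            Ne.symm hji, rfl⟩
        · exact hO x hx htrue
      · intro x hx hfalse
        rcases List.mem_cons.1 hx with rfl | hx
        · have hio : ¬(i % 2 = 1) := of_decide_eq_false hfalse
          exact ⟨i, σ i, by omega, by omega, by omega, by omega, by omega, by omega,
            Ne.symm hji, rfl⟩
        · exact hE x hx hfalse
      · rw [List.map_cons, List.prod_cons, hprod, ← mul_assoc, Equiv.swap_mul_self, one_mul]

lemma mixed_mem (n : ℕ) (hn : n % 8 = 5) (hn5 : 5 ≤ n) :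
    Equiv.swap 1 3 * Equiv.swap 2 4 ∈ C n (n + 3) := by
  obtain ⟨K, hK⟩ : ∃ K, n = 2 * K + 1 := ⟨(n - 1) / 2, by omega⟩
  have hO : ∀ x ∈ (List.range K).map
      (fun k => (decide ((1 + k) % 2 = 1), Equiv.swap (1 + k) (1 + 2 * K - k))),
      x.1 = true → oddSwap n x.2 := by
    intro x hx htrue
    obtain ⟨k, hk, rfl⟩ := List.mem_map.1 hx
    rw [List.mem_range] at hk
    have hkk : (1 + k) % 2 = 1 := of_decide_eq_true htrue
    exact ⟨1 + k, 1 + 2 * K - k, hkk, by omega, by omega, by omega, by omega, by omega,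
      by omega, rfl⟩
  have hE : ∀ x ∈ (List.range K).map
      (fun k => (decide ((1 + k) % 2 = 1), Equiv.swap (1 + k) (1 + 2 * K - k))),
      x.1 = false → evenSwap n x.2 := by
    intro x hx hfalse
    obtain ⟨k, hk, rfl⟩ := List.mem_map.1 hx
    rw [List.mem_range] at hk
    have hkk : ¬((1 + k) % 2 = 1) := of_decide_eq_false hfalse
    exact ⟨1 + k, 1 + 2 * K - k, by omega, by omega, by omega, by omega, by omega, by omega,
      by omega, rfl⟩
  obtain ⟨lO, lE, h1, h2, h3, h4, h5⟩ := sep n _ hO hE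
  have hsnd : ((List.map Prod.snd ((List.range K).map
      (fun k => (decide ((1 + k) % 2 = 1), Equiv.swap (1 + k) (1 + 2 * K - k)))))).prod
      = crossPerm n 1 := by
    rw [List.map_map]
    have he : (Prod.snd ∘ fun k =>
        ((decide ((1 + k) % 2 = 1), Equiv.swap (1 + k) (1 + 2 * K - k)) : Bool × Equiv.Perm ℕ))
        = fun k => Equiv.swap (1 + k) (1 + 2 * K - k) := rfl
    rw [he, crossPerm_eq_prod K 1, ← hK]
  rw [hsnd] at h3
  rw [count_true _ K] at h4
  rw [count_false _ K] at h5
  have hoO : ¬Even lO.length := by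
    rw [Nat.even_iff, h4]
    omega
  have hoE : ¬Even lE.length := by
    rw [Nat.even_iff, h5]
    omega
  have hu := (odd_list_mem n hn hn5 lO h1).2 hoO
  have hv := (even_list_mem n hn hn5 lE h2).2 hoE
  have hcomm : (Equiv.swap 1 3 * lO.prod) * Equiv.swap 2 4
      = Equiv.swap 2 4 * (Equiv.swap 1 3 * lO.prod) := by
    have hm : movesOdd (Equiv.swap 1 3 * lO.prod) :=
      movesOdd_mul (oddSwap_movesOdd n _ (oddSwap_13 n hn5))
        (movesOdd_prod lO (fun s hs => oddSwap_movesOdd n s (h1 s hs)))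
    exact (commute_of_moves hm (evenSwap_movesEven n _ (evenSwap_24 n hn5))).eq
  -- (s13*A)*(s24*B) = s13*s24*(A*B) = s13*s24*π₁  → no; here u = s13*A, v = s24*B:
  -- u * v = s13 * A * (s24 * B) = s13 * (A * s24) * B; but we use hcomm differently:
  have key : (Equiv.swap 1 3 * lO.prod) * (Equiv.swap 2 4 * lE.prod)
      = (Equiv.swap 1 3 * Equiv.swap 2 4) * (lO.prod * lE.prod) := by
    have hcA : lO.prod * Equiv.swap 2 4 = Equiv.swap 2 4 * lO.prod :=
      (commute_of_moves (movesOdd_prod lO (fun s hs => oddSwap_movesOdd n s (h1 s hs)))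
        (evenSwap_movesEven n _ (evenSwap_24 n hn5))).eq
    rw [mul_assoc, ← mul_assoc lO.prod, hcA, mul_assoc, ← mul_assoc, ← mul_assoc, mul_assoc]
  have e : Equiv.swap 1 3 * Equiv.swap 2 4
      = ((Equiv.swap 1 3 * lO.prod) * (Equiv.swap 2 4 * lE.prod)) * (crossPerm n 1)⁻¹ := by
    rw [key, h3, mul_inv_cancel_right]
  rw [e]
  exact mul_mem (mul_mem hu hv) (inv_mem (gen_mem n 1 (by omega) (by omega)))

lemma evenperm_one : IsEvenPerm 1 := ⟨[], by simp, by simp, by simp⟩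

lemma evenperm_mul {f g : Equiv.Perm ℕ} (hf : IsEvenPerm f) (hg : IsEvenPerm g) :
    IsEvenPerm (f * g) := by
  obtain ⟨lf, h1, h2, h3⟩ := hf
  obtain ⟨lg, g1, g2, g3⟩ := hg
  refine ⟨lf ++ lg, ?_, ?_, ?_⟩
  · intro t ht
    rcases List.mem_append.1 ht with h | h
    exacts [h1 t h, g1 t h]
  · rw [List.prod_append, h2, g2]
  · rw [List.length_append]
    exact h3.add g3

lemma evenperm_inv {f : Equiv.Perm ℕ} (hf : IsEvenPerm f) : IsEvenPerm f⁻¹ := by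
  obtain ⟨l, h1, h2, h3⟩ := hf
  refine ⟨(l.map (fun t => t⁻¹)).reverse, ?_, ?_, ?_⟩
  · intro t ht
    rw [List.mem_reverse, List.mem_map] at ht
    obtain ⟨s, hs, rfl⟩ := ht
    obtain ⟨x, y, hxy, rfl⟩ := h1 s hs
    exact ⟨x, y, hxy, by rw [Equiv.swap_inv]⟩
  · rw [← List.prod_inv_reverse, h2]
  · simpa using h3

theorem stmt18 (n : ℕ) (hn : n % 8 = 5) (hn5 : 5 ≤ n) (hn205 : n ≤ 205) :
    ∀ σ : Equiv.Perm ℕ, σ ∈ C n (n + 3) ↔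
      ((∀ i, σ i % 2 = i % 2) ∧ (∀ i, σ i ≠ i → 1 ≤ i ∧ i ≤ n + 3) ∧ IsEvenPerm σ) := by
  intro σ
  constructor
  · intro hσ
    let H : Subgroup (Equiv.Perm ℕ) :=
      { carrier := {τ | (∀ i, τ i % 2 = i % 2) ∧ (∀ i, τ i ≠ i → 1 ≤ i ∧ i ≤ n + 3) ∧
          IsEvenPerm τ}
        one_mem' := ⟨by simp, by simp, evenperm_one⟩
        mul_mem' := by
          rintro f g ⟨hf1, hf2, hf3⟩ ⟨hg1, hg2, hg3⟩
          refine ⟨?_, ?_, evenperm_mul hf3 hg3⟩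
          · intro i
            rw [Equiv.Perm.mul_apply, hf1 (g i), hg1 i]
          · intro i hi
            rw [Equiv.Perm.mul_apply] at hi
            by_cases h : g i = i
            · exact hf2 i (by rwa [h] at hi)
            · exact hg2 i h
        inv_mem' := by
          rintro f ⟨hf1, hf2, hf3⟩
          refine ⟨?_, ?_, evenperm_inv hf3⟩
          · intro i
            conv_rhs => rw [show i = f (f⁻¹ i) by simp]
            rw [hf1 (f⁻¹ i)]
          · intro i hi
            apply hf2
            intro h
            apply hi
            conv_lhs => rw [← h]
            simp }
    have hle : C n (n + 3) ≤ H := by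
      rw [C, Subgroup.closure_le]
      rintro τ ⟨j, hj1, hj4, rfl⟩
      have hj4' : j ≤ 4 := by omega
      refine ⟨?_, ?_, ?_⟩
      · intro i
        rw [crossPerm_apply]
        unfold crossFun
        split_ifs <;> omega
      · intro i hi
        rw [crossPerm_apply] at hi
        unfold crossFun at hi
        split_ifs at hi <;> omega
      · obtain ⟨K, hK⟩ : ∃ K, n = 2 * K + 1 := ⟨(n - 1) / 2, by omega⟩
        refine ⟨(List.range K).map (fun k => Equiv.swap (j + k) (j + 2 * K - k)), ?_, ?_, ?_⟩
        · intro t ht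
          obtain ⟨k, hk, rfl⟩ := List.mem_map.1 ht
          rw [List.mem_range] at hk
          exact ⟨j + k, j + 2 * K - k, by omega, rfl⟩
        · have := crossPerm_eq_prod K j
          rwa [← hK] at this
        · rw [List.length_map, List.length_range]
          rw [Nat.even_iff]
          omega
    exact hle hσ
  · rintro ⟨hpar, hsupp, heven⟩
    obtain ⟨lbl, hO, hE, hprod⟩ := decomp n hn _ σ le_rfl hpar hsupp
    obtain ⟨lO, lE, h1, h2, h3, _, _⟩ := sep n lbl hO hE
    rw [hprod] at h3
    have hswaps : ∀ t ∈ lO ++ lE, t.IsSwap := by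
      intro t ht
      rcases List.mem_append.1 ht with h | h
      · obtain ⟨x, y, _, _, _, _, _, _, hxy, rfl⟩ := h1 t h
        exact ⟨x, y, hxy, rfl⟩
      · obtain ⟨x, y, _, _, _, _, _, _, hxy, rfl⟩ := h2 t h
        exact ⟨x, y, hxy, rfl⟩
    have hparsum : Even (lO.length + lE.length) := by
      obtain ⟨l2, hl2s, hl2p, hl2e⟩ := heven
      have hiff := swap_lists_even_iff (lO ++ lE) l2 hswaps hl2s
        (by rw [List.prod_append, h3, hl2p])
      rw [List.length_append] at hiff
      exact hiff.2 hl2e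
    rcases Nat.even_or_odd lO.length with heO | hoO <;>
      rcases Nat.even_or_odd lE.length with heE | hoE
    · rw [← h3]
      exact mul_mem ((odd_list_mem n hn hn5 lO h1).1 heO)
        ((even_list_mem n hn hn5 lE h2).1 heE)
    · exfalso
      rw [Nat.even_add] at hparsum
      rw [← Nat.not_even_iff_odd] at hoE
      exact hoE (hparsum.1 heO)
    · exfalso
      rw [Nat.even_add] at hparsum
      rw [← Nat.not_even_iff_odd] at hoO
      exact hoO (hparsum.2 heE)
    · rw [← Nat.not_even_iff_odd] at hoO hoE
      have hu := (odd_list_mem n hn hn5 lO h1).2 hoO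
      have hv := (even_list_mem n hn hn5 lE h2).2 hoE
      have hA : lO.prod = Equiv.swap 1 3 * (Equiv.swap 1 3 * lO.prod) := by
        rw [← mul_assoc, Equiv.swap_mul_self, one_mul]
      have hB : lE.prod = Equiv.swap 2 4 * (Equiv.swap 2 4 * lE.prod) := by
        rw [← mul_assoc, Equiv.swap_mul_self, one_mul]
      have hcomm : (Equiv.swap 1 3 * lO.prod) * Equiv.swap 2 4
          = Equiv.swap 2 4 * (Equiv.swap 1 3 * lO.prod) := by
        have hm : movesOdd (Equiv.swap 1 3 * lO.prod) :=
          movesOdd_mul (oddSwap_movesOdd n _ (oddSwap_13 n hn5))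
            (movesOdd_prod lO (fun s hs => oddSwap_movesOdd n s (h1 s hs)))
        exact (commute_of_moves hm (evenSwap_movesEven n _ (evenSwap_24 n hn5))).eq
      have e : σ = (Equiv.swap 1 3 * Equiv.swap 2 4)
          * ((Equiv.swap 1 3 * lO.prod) * (Equiv.swap 2 4 * lE.prod)) := by
        rw [← h3]
        conv_lhs => rw [hA, hB]
        rw [mul_assoc, ← mul_assoc (Equiv.swap 1 3 * lO.prod), hcomm]
        rw [mul_assoc (Equiv.swap 2 4), ← mul_assoc, ← mul_assoc, mul_assoc]
      rw [e]
      exact mul_mem (mixed_mem n hn hn5) (mul_mem hu hv)
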